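/- For k = m, the generating function of admissible sequences (sequences over {1,...,m} with no m consecutive strictly decreasing entries) satisfies F_{m,m}(t_1,...,t_m) = 1/(1 − (t_1 + ... + t_m) + t_1 t_2 ··· t_m), i.e., F_{m,m} · (1 − (t_1+...+t_m) + t_1···t_m) = 1 as formal power series. -/

import Mathlib

/-- `l` has a strictly decreasing run of length `k` starting at position `i`. -/
def HasStrictDecRunAt (k : ℕ) (l : List ℕ) (i : ℕ) : Prop :=
  i + k ≤ l.length ∧ ∀ j, j + 1 < k → l.getD (i + j + 1) 0 < l.getD (i + j) 0

/-- A sequence is `k`-admissible if no `k` consecutive entries are strictly decreasing. -/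
def Admissible (k : ℕ) (l : List ℕ) : Prop := ∀ i, ¬ HasStrictDecRunAt k l i

/-- The generating function `∑ t_{i_1} ⋯ t_{i_ℓ}` over admissible sequences over `{1,…,m}`. -/
noncomputable def admGenFun (m k : ℕ) : MvPowerSeries (Fin m) ℤ := fun d =>
  (Nat.card {l : List ℕ // (∀ x ∈ l, 1 ≤ x ∧ x ≤ m) ∧ Admissible k l ∧
    ∀ i : Fin m, l.count (i.1 + 1) = d i} : ℤ)

namespace AdmAux

/-- the word `[m, m-1, …, 1]` -/
def descWord (m : ℕ) : List ℕ := (List.range' 1 m).reverse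

@[simp] lemma length_descWord (m : ℕ) : (descWord m).length = m := by
  simp [descWord]

lemma getElem_descWord {m j : ℕ} (h : j < m) :
    (descWord m)[j]'(by simpa using h) = m - j := by
  simp only [descWord, List.getElem_reverse, List.length_range', List.getElem_range'_1]
  omega

lemma mem_descWord {m x : ℕ} : x ∈ descWord m ↔ 1 ≤ x ∧ x ≤ m := by
  simp only [descWord, List.mem_reverse, List.mem_range']
  constructor
  · rintro ⟨i, hi, rfl⟩; omega
  · rintro ⟨h1, h2⟩; exact ⟨x - 1, by omega, by omega⟩

lemma count_descWord {m x : ℕ} : (descWord m).count x = if 1 ≤ x ∧ x ≤ m then 1 else 0 := by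
  have hnd : (descWord m).Nodup := by
    simpa [descWord] using (List.nodup_range' (s := 1) (n := m))
  split_ifs with h
  · exact List.count_eq_one_of_mem hnd (mem_descWord.mpr h)
  · exact List.count_eq_zero_of_not_mem (fun hx => h (mem_descWord.mp hx))

lemma dropLast_reverse' (l : List ℕ) : l.reverse.dropLast = l.tail.reverse := by
  have := List.tail_reverse (l := l.reverse)
  rw [List.reverse_reverse] at this
  rw [this, List.reverse_reverse]

lemma dropLast_descWord (m : ℕ) :
    (descWord m).dropLast = (List.range' 2 (m - 1)).reverse := by
  cases m with
  | zero => simp [descWord]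
  | succ n =>
    rw [descWord, dropLast_reverse', List.range'_succ]
    simp

lemma getD_bounds {m : ℕ} {w : List ℕ} (hw : ∀ x ∈ w, 1 ≤ x ∧ x ≤ m) {p : ℕ}
    (hp : p < w.length) : 1 ≤ w.getD p 0 ∧ w.getD p 0 ≤ m := by
  rw [List.getD_eq_getElem _ _ hp]
  exact hw _ (List.getElem_mem hp)

lemma run_chain {m : ℕ} {w : List ℕ} {i : ℕ}
    (h : HasStrictDecRunAt m w i) :
    ∀ δ j, j + δ < m → w.getD (i + j + δ) 0 + δ ≤ w.getD (i + j) 0 := by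
  intro δ
  induction δ with
  | zero => intro j _; simp
  | succ δ ih =>
    intro j hj
    have h1 := ih j (by omega)
    have h2 := h.2 (j + δ) (by omega)
    have e : i + (j + δ) + 1 = i + j + (δ + 1) := by omega
    have e2 : i + (j + δ) = i + j + δ := by omega
    rw [e, e2] at h2
    omega

lemma run_values {m : ℕ} {w : List ℕ} (hw : ∀ x ∈ w, 1 ≤ x ∧ x ≤ m) {i : ℕ}
    (h : HasStrictDecRunAt m w i) : ∀ j, j < m → w.getD (i + j) 0 = m - j := by
  intro j hj
  have hlen := h.1
  have hup : w.getD (i + 0 + j) 0 + j ≤ w.getD (i + 0) 0 := run_chain h j 0 (by omega)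
  have h0 : w.getD (i + 0) 0 ≤ m := (getD_bounds hw (by omega)).2
  have hlow : w.getD (i + j + (m - 1 - j)) 0 + (m - 1 - j) ≤ w.getD (i + j) 0 :=
    run_chain h (m - 1 - j) j (by omega)
  have e : i + j + (m - 1 - j) = i + (m - 1) := by omega
  rw [e] at hlow
  have h1 : 1 ≤ w.getD (i + (m - 1)) 0 := (getD_bounds hw (by omega)).1
  have e2 : i + 0 + j = i + j := by omega
  rw [e2] at hup
  omega

lemma run_of_prefix {k : ℕ} {u v : List ℕ} {i : ℕ} (h : i + k ≤ u.length) :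
    HasStrictDecRunAt k (u ++ v) i ↔ HasStrictDecRunAt k u i := by
  have hg : ∀ j, j < k → (u ++ v).getD (i + j) 0 = u.getD (i + j) 0 := by
    intro j hj
    exact List.getD_append _ _ _ _ (by omega)
  constructor
  · rintro ⟨h1, h2⟩
    refine ⟨h, fun j hj => ?_⟩
    have e1 := hg (j + 1) (by omega)
    have e2 := hg j (by omega)
    have e3 : i + (j + 1) = i + j + 1 := by omega
    rw [e3] at e1
    rw [← e1, ← e2]
    exact h2 j hj
  · rintro ⟨h1, h2⟩
    refine ⟨by rw [List.length_append]; omega, fun j hj => ?_⟩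
    have e1 := hg (j + 1) (by omega)
    have e2 := hg j (by omega)
    have e3 : i + (j + 1) = i + j + 1 := by omega
    rw [e3] at e1
    rw [e1, e2]
    exact h2 j hj

lemma adm_prefix {k : ℕ} {u v : List ℕ} (h : Admissible k (u ++ v)) : Admissible k u :=
  fun i hi => h i ((run_of_prefix hi.1).2 hi)

lemma adm_dropLast {k : ℕ} {w : List ℕ} (hne : w ≠ []) (h : Admissible k w) :
    Admissible k w.dropLast := by
  have := List.dropLast_append_getLast hne
  exact adm_prefix (v := [w.getLast hne]) (by rwa [this])

lemma adm_nil {k : ℕ} (hk : 1 ≤ k) : Admissible k [] := by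
  rintro i ⟨h1, -⟩
  simp at h1
  omega

/-- master finiteness -/
lemma finite_master (m N : ℕ) : {l : List ℕ | (∀ x ∈ l, x ≤ m) ∧ l.length ≤ N}.Finite := by
  have h1 : {l : List (Fin (m + 1)) | l.length ≤ N}.Finite := List.finite_length_le _ N
  apply Set.Finite.subset (h1.image (List.map Fin.val))
  rintro l ⟨hb, hlen⟩
  refine ⟨l.map (fun x => (⟨x % (m + 1), Nat.mod_lt _ (Nat.succ_pos m)⟩ : Fin (m + 1))), by
    simpa using hlen, ?_⟩
  rw [List.map_map]
  conv_rhs => rw [show l = l.map id from (List.map_id l).symm]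
  apply List.map_congr_left
  intro x hx
  have hx' : x % (m + 1) = x := Nat.mod_eq_of_lt (by have := hb x hx; omega)
  simp [hx']

lemma length_le_of_counts {m : ℕ} {l : List ℕ} (hP : ∀ x ∈ l, 1 ≤ x ∧ x ≤ m)
    {d : Fin m →₀ ℕ} (hc : ∀ j : Fin m, l.count (j.1 + 1) ≤ d j) :
    l.length ≤ ∑ j : Fin m, d j := by
  classical
  have h1 : l.length = ∑ a ∈ l.toFinset, l.count a := by
    have := Multiset.toFinset_sum_count_eq (l : Multiset ℕ)
    simpa using this.symm
  have hsub : l.toFinset ⊆ Finset.image (fun j : Fin m => j.1 + 1) Finset.univ := by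
    intro a ha
    rw [List.mem_toFinset] at ha
    obtain ⟨h1, h2⟩ := hP a ha
    exact Finset.mem_image.mpr ⟨⟨a - 1, by omega⟩, Finset.mem_univ _, by simp; omega⟩
  calc l.length = ∑ a ∈ l.toFinset, l.count a := h1
    _ ≤ ∑ a ∈ Finset.image (fun j : Fin m => j.1 + 1) Finset.univ, l.count a :=
        Finset.sum_le_sum_of_subset hsub
    _ = ∑ j : Fin m, l.count (j.1 + 1) := by
        rw [Finset.sum_image]
        intro x _ y _ h
        exact Fin.ext (by simp only at h; omega)
    _ ≤ ∑ j : Fin m, d j := Finset.sum_le_sum (fun j _ => hc j)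

/-- H4: appending `[m, …, 2]` to an admissible word keeps it admissible. -/
lemma getElem_dropLast_descWord {m j : ℕ} (h : j < m - 1) :
    ((descWord m).dropLast)[j]'(by rw [List.length_dropLast, length_descWord]; omega) = m - j := by
  rw [List.getElem_of_eq (dropLast_descWord m) (by rw [List.length_dropLast, length_descWord] at *; simpa using h)]
  rw [List.getElem_reverse, List.getElem_range'_1]
  simp only [List.length_range']
  omega

lemma adm_append_tailDesc {m : ℕ} (hm : 2 ≤ m) {u : List ℕ}
    (hP : ∀ x ∈ u, 1 ≤ x ∧ x ≤ m) (hu : Admissible m u) :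
    Admissible m (u ++ (descWord m).dropLast) := by
  set D' := (descWord m).dropLast with hD'
  have hlenD' : D'.length = m - 1 := by
    rw [hD', List.length_dropLast, length_descWord]
  have hPD' : ∀ x ∈ D', 1 ≤ x ∧ x ≤ m := fun x hx =>
    mem_descWord.mp (List.mem_of_mem_dropLast hx)
  have hPw : ∀ x ∈ u ++ D', 1 ≤ x ∧ x ≤ m := by
    intro x hx
    rcases List.mem_append.mp hx with h | h
    · exact hP x h
    · exact hPD' x h
  rintro i hi
  have hlen : i + m ≤ u.length + (m - 1) := by
    have := hi.1; rwa [List.length_append, hlenD'] at this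
  by_cases hc : i + m ≤ u.length
  · exact hu i ((run_of_prefix hc).mp hi)
  · -- position i + (m-1) lies in D', value would be 1, but D' entries are ≥ 2
    have hv := run_values hPw hi (m - 1) (by omega)
    have hidx : u.length ≤ i + (m - 1) := by omega
    rw [List.getD_append_right _ _ _ _ hidx] at hv
    have hlt : i + (m - 1) - u.length < D'.length := by omega
    rw [List.getD_eq_getElem _ _ hlt] at hv
    have h2 : D'[i + (m - 1) - u.length]'hlt = m - (i + (m - 1) - u.length) :=
      getElem_dropLast_descWord (by omega)
    rw [h2] at hv
    omega

/-- appending the full descending word creates a (unique) bad run at the end -/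
lemma not_adm_append_desc {m : ℕ} (hm : 2 ≤ m) {u : List ℕ} :
    ¬ Admissible m (u ++ descWord m) := by
  intro h
  apply h u.length
  constructor
  · rw [List.length_append, length_descWord]
  · intro j hj
    have e1 : (u ++ descWord m).getD (u.length + j) 0 = m - j := by
      rw [List.getD_append_right _ _ _ _ (by omega),
        List.getD_eq_getElem _ _ (by rw [length_descWord]; omega)]
      have : u.length + j - u.length = j := by omega
      simp_rw [this]
      exact getElem_descWord (by omega)
    have e2 : (u ++ descWord m).getD (u.length + j + 1) 0 = m - (j + 1) := by
      rw [List.getD_append_right _ _ _ _ (by omega),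
        List.getD_eq_getElem _ _ (by rw [length_descWord]; omega)]
      have : u.length + j + 1 - u.length = j + 1 := by omega
      simp_rw [this]
      exact getElem_descWord (by omega)
    rw [e1, e2]
    omega

lemma dropLast_append_desc {m : ℕ} (hm : 2 ≤ m) (u : List ℕ) :
    (u ++ descWord m).dropLast = u ++ (descWord m).dropLast := by
  apply List.dropLast_append_of_ne_nil
  intro h
  have := length_descWord m
  rw [h] at this
  simp at this
  omega

/-- H6 : decomposition of a word whose only bad run is at the end -/
lemma decomp {m : ℕ} (hm : 2 ≤ m) {w : List ℕ}
    (hP : ∀ x ∈ w, 1 ≤ x ∧ x ≤ m) (hne : w ≠ [])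
    (hdl : Admissible m w.dropLast) (hnadm : ¬ Admissible m w) :
    Admissible m (w.take (w.length - m)) ∧ w = w.take (w.length - m) ++ descWord m := by
  rw [Admissible, not_forall] at hnadm
  obtain ⟨i, hi⟩ := hnadm
  rw [not_not] at hi
  have hlen := hi.1
  have him : i + m = w.length := by
    by_contra hcon
    have hlt : i + m ≤ w.length - 1 := by omega
    have hrun : HasStrictDecRunAt m w.dropLast i := by
      have hd : w.dropLast ++ [w.getLast hne] = w := List.dropLast_append_getLast hne
      have hlen' : i + m ≤ w.dropLast.length := by rw [List.length_dropLast]; omega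
      exact (run_of_prefix (v := [w.getLast hne]) hlen').mp (by rwa [hd])
    exact hdl i hrun
  have hvals := run_values hP hi
  have hieq : w.length - m = i := by omega
  rw [hieq]
  have hdropD : w.drop i = descWord m := by
    apply List.ext_getElem
    · rw [List.length_drop, length_descWord]; omega
    · intro j h1 h2
      rw [List.getElem_drop]
      have hj : j < m := by rw [List.length_drop] at h1; omega
      have hv := hvals j hj
      rw [List.getD_eq_getElem _ _ (by omega)] at hv
      exact hv.trans (getElem_descWord hj).symm
  constructor
  · have htk : w.take i = w.dropLast.take i := by
      rw [List.dropLast_eq_take, List.take_take]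
      congr 1
      omega
    rw [htk]
    exact adm_prefix (v := w.dropLast.drop i) (by rw [List.take_append_drop]; exact hdl)
  · conv_lhs => rw [← List.take_append_drop i w]
    rw [hdropD]


section Counting

variable (m : ℕ) (d : Fin m →₀ ℕ)

def SetA := {l : List ℕ // (∀ x ∈ l, 1 ≤ x ∧ x ≤ m) ∧ Admissible m l ∧
    ∀ i : Fin m, l.count (i.1 + 1) = d i}

def SetS (i : Fin m) := {l : List ℕ // (∀ x ∈ l, 1 ≤ x ∧ x ≤ m) ∧ Admissible m l ∧
    ∀ j : Fin m, l.count (j.1 + 1) + (if j = i then 1 else 0) = d j}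

def SetT := {w : List ℕ // (∀ x ∈ w, 1 ≤ x ∧ x ≤ m) ∧ w ≠ [] ∧ Admissible m w.dropLast ∧
    ∀ j : Fin m, w.count (j.1 + 1) = d j}

def SetT1 := {w : List ℕ // ((∀ x ∈ w, 1 ≤ x ∧ x ≤ m) ∧ w ≠ [] ∧ Admissible m w.dropLast ∧
    ∀ j : Fin m, w.count (j.1 + 1) = d j) ∧ Admissible m w}

def SetT2 := {w : List ℕ // ((∀ x ∈ w, 1 ≤ x ∧ x ≤ m) ∧ w ≠ [] ∧ Admissible m w.dropLast ∧
    ∀ j : Fin m, w.count (j.1 + 1) = d j) ∧ ¬ Admissible m w}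

def SetU := {u : List ℕ // (∀ x ∈ u, 1 ≤ x ∧ x ≤ m) ∧ Admissible m u ∧
    ∀ j : Fin m, u.count (j.1 + 1) + 1 = d j}

variable {m d}

lemma finite_subtype {Q : List ℕ → Prop}
    (hQ : ∀ l, Q l → (∀ x ∈ l, 1 ≤ x ∧ x ≤ m) ∧ ∀ j : Fin m, l.count (j.1 + 1) ≤ d j) :
    Finite {l : List ℕ // Q l} := by
  have hsub : {l | Q l} ⊆ {l : List ℕ | (∀ x ∈ l, x ≤ m) ∧ l.length ≤ ∑ j : Fin m, d j} :=
    fun l hl => ⟨fun x hx => ((hQ l hl).1 x hx).2,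
      length_le_of_counts (hQ l hl).1 (hQ l hl).2⟩
  exact ((finite_master m _).subset hsub).to_subtype

instance : Finite (SetA m d) := by
  unfold SetA
  exact finite_subtype (fun l hl => ⟨hl.1, fun j => le_of_eq (hl.2.2 j)⟩)

instance (i : Fin m) : Finite (SetS m d i) := by
  unfold SetS
  exact finite_subtype (d := d) (Q := fun l => (∀ x ∈ l, 1 ≤ x ∧ x ≤ m) ∧ Admissible m l ∧
      ∀ j : Fin m, l.count (j.1 + 1) + (if j = i then 1 else 0) = d j)
    (fun l hl => ⟨hl.1, fun j => by have := hl.2.2 j; omega⟩)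

instance : Finite (SetT m d) := by
  unfold SetT
  exact finite_subtype (fun l hl => ⟨hl.1, fun j => le_of_eq (hl.2.2.2 j)⟩)

instance : Finite (SetT1 m d) := by
  unfold SetT1
  exact finite_subtype (fun l hl => ⟨hl.1.1, fun j => le_of_eq (hl.1.2.2.2 j)⟩)

instance : Finite (SetT2 m d) := by
  unfold SetT2
  exact finite_subtype (fun l hl => ⟨hl.1.1, fun j => le_of_eq (hl.1.2.2.2 j)⟩)

instance : Finite (SetU m d) := by
  unfold SetU
  exact finite_subtype (d := d) (Q := fun l => (∀ x ∈ l, 1 ≤ x ∧ x ≤ m) ∧ Admissible m l ∧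
      ∀ j : Fin m, l.count (j.1 + 1) + 1 = d j)
    (fun l hl => ⟨hl.1, fun j => by have := hl.2.2 j; omega⟩)

lemma count_concat (l : List ℕ) (x n : ℕ) :
    (l ++ [x]).count n = l.count n + (if x = n then 1 else 0) := by
  simp [List.count_append, List.count_singleton']

/-- E1 -/
lemma card_sigma_S : Nat.card (Σ i : Fin m, SetS m d i) = Nat.card (SetT m d) := by
  apply Nat.card_congr
  apply Equiv.ofBijective (f := fun p =>
    (⟨p.2.1 ++ [p.1.1 + 1], by
      obtain ⟨i, l, hP, hAdm, hcount⟩ := p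
      refine ⟨?_, by simp, ?_, ?_⟩
      · intro x hx
        rcases List.mem_append.mp hx with h | h
        · exact hP x h
        · simp at h
          subst h
          exact ⟨by omega, by have := i.2; omega⟩
      · rwa [List.dropLast_concat]
      · intro j
        rw [count_concat]
        have hiff : ((i.1 + 1 : ℕ) = j.1 + 1) ↔ (j = i) := by
          rw [Fin.ext_iff]; omega
        rw [if_congr hiff rfl rfl]
        exact hcount j⟩ : SetT m d))
  constructor
  · rintro ⟨i, l, hl⟩ ⟨i', l', hl'⟩ h
    simp only [Subtype.mk.injEq] at h
    obtain ⟨hll, hrr⟩ := List.append_inj' h rfl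
    have hii : i = i' := by
      simp only [List.cons.injEq] at hrr
      exact Fin.ext (by omega)
    subst hii
    exact congrArg (Sigma.mk i) (Subtype.ext hll)
  · rintro ⟨w, hP, hne, hAdm, hcount⟩
    have hmem := List.getLast_mem hne
    obtain ⟨h1, h2⟩ := hP _ hmem
    have hw : w.dropLast ++ [w.getLast hne] = w := List.dropLast_append_getLast hne
    refine ⟨⟨⟨w.getLast hne - 1, by omega⟩, ⟨w.dropLast, ?_, hAdm, ?_⟩⟩, ?_⟩
    · exact fun x hx => hP x (List.mem_of_mem_dropLast hx)
    · intro j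
      have hc := hcount j
      rw [← hw, count_concat] at hc
      have hiff : (w.getLast hne = j.1 + 1) ↔ (j = (⟨w.getLast hne - 1, by omega⟩ : Fin m)) := by
        rw [Fin.ext_iff]; simp; omega
      rwa [if_congr hiff rfl rfl] at hc
    · apply Subtype.ext
      show w.dropLast ++ [w.getLast hne - 1 + 1] = w
      rw [show w.getLast hne - 1 + 1 = w.getLast hne by omega, hw]

/-- E2 -/
lemma card_T_split : Nat.card (SetT m d) = Nat.card (SetT1 m d) + Nat.card (SetT2 m d) := by
  classical
  have e1 : SetT m d ≃ {w : SetT m d // Admissible m w.1} ⊕ {w : SetT m d // ¬ Admissible m w.1} :=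
    (Equiv.sumCompl _).symm
  have e2 : {w : SetT m d // Admissible m w.1} ≃ SetT1 m d :=
    Equiv.subtypeSubtypeEquivSubtypeInter _ _
  have e3 : {w : SetT m d // ¬ Admissible m w.1} ≃ SetT2 m d :=
    Equiv.subtypeSubtypeEquivSubtypeInter
      (p := fun w : List ℕ => (∀ x ∈ w, 1 ≤ x ∧ x ≤ m) ∧ w ≠ [] ∧ Admissible m w.dropLast ∧
        ∀ j : Fin m, w.count (j.1 + 1) = d j)
      (q := fun w => ¬ Admissible m w)
  rw [Nat.card_congr e1, Nat.card_sum, Nat.card_congr e2, Nat.card_congr e3]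

/-- E3 -/
lemma card_T1 (hm : 2 ≤ m) (hd : d ≠ 0) : Nat.card (SetT1 m d) = Nat.card (SetA m d) := by
  apply Nat.card_congr
  apply Equiv.subtypeEquivRight
  intro l
  constructor
  · rintro ⟨⟨hP, hne, hdl, hc⟩, hAdm⟩
    exact ⟨hP, hAdm, hc⟩
  · rintro ⟨hP, hAdm, hc⟩
    have hne : l ≠ [] := by
      obtain ⟨j, hj⟩ : ∃ j, d j ≠ 0 := by
        by_contra hco
        push_neg at hco
        exact hd (Finsupp.ext hco)
      intro hnil
      rw [hnil] at hc
      exact hj ((hc j).symm.trans List.count_nil)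
    exact ⟨⟨hP, hne, adm_dropLast hne hAdm, hc⟩, hAdm⟩

/-- E4 -/
lemma card_T2 (hm : 2 ≤ m) : Nat.card (SetT2 m d) = Nat.card (SetU m d) := by
  apply Nat.card_congr
  apply Equiv.symm
  apply Equiv.ofBijective (f := fun p =>
    (⟨p.1 ++ descWord m, by
      obtain ⟨u, hP, hAdm, hcount⟩ := p
      have hDne : descWord m ≠ [] := by
        intro h
        have := length_descWord m
        rw [h] at this
        simp at this
        omega
      refine ⟨⟨?_, ?_, ?_, ?_⟩, not_adm_append_desc hm⟩
      · intro x hx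
        rcases List.mem_append.mp hx with h | h
        · exact hP x h
        · exact mem_descWord.mp h
      · simp [hDne]
      · rw [dropLast_append_desc hm]
        exact adm_append_tailDesc hm hP hAdm
      · intro j
        rw [List.count_append, count_descWord, if_pos ⟨by omega, by have := j.2; omega⟩]
        exact hcount j⟩ : SetT2 m d))
  constructor
  · rintro ⟨u, hu⟩ ⟨u', hu'⟩ h
    simp only [Subtype.mk.injEq] at h
    exact Subtype.ext (List.append_inj' h rfl).1
  · rintro ⟨w, ⟨hP, hne, hdl, hcount⟩, hnadm⟩
    obtain ⟨hAdm', hdec⟩ := decomp hm hP hne hdl hnadm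
    refine ⟨⟨w.take (w.length - m), ?_, hAdm', ?_⟩, Subtype.ext hdec.symm⟩
    · exact fun x hx => hP x (List.take_subset _ _ hx)
    · intro j
      have hc := hcount j
      rw [hdec, List.count_append, count_descWord,
        if_pos ⟨by omega, by have := j.2; omega⟩] at hc
      exact hc

end Counting

section Cards

variable {m : ℕ} {d : Fin m →₀ ℕ}

lemma nat_card_sigma (f : Fin m → Type*) [∀ i, Finite (f i)] :
    Nat.card ((i : Fin m) × f i) = ∑ i, Nat.card (f i) := by
  letI : ∀ i, Fintype (f i) := fun i => Fintype.ofFinite _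
  simp [Nat.card_eq_fintype_card, Fintype.card_sigma]

lemma card_S_pos {i : Fin m} (h : 1 ≤ d i) :
    Nat.card (SetS m d i) = Nat.card (SetA m (d - Finsupp.single i 1)) := by
  apply Nat.card_congr
  apply Equiv.subtypeEquivRight
  intro l
  refine and_congr_right (fun _ => and_congr_right (fun _ => forall_congr' (fun j => ?_)))
  rw [Finsupp.tsub_apply, Finsupp.single_apply]
  rcases eq_or_ne i j with rfl | hne
  · split_ifs <;> omega
  · rw [if_neg hne, if_neg (fun h' => hne h'.symm)]
    omega

lemma card_S_zero {i : Fin m} (h : d i = 0) : Nat.card (SetS m d i) = 0 := by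
  have : IsEmpty (SetS m d i) := by
    refine ⟨fun x => ?_⟩
    have hc := x.2.2.2 i
    rw [if_pos rfl] at hc
    omega
  exact Nat.card_of_isEmpty

lemma sum_single_apply (j : Fin m) : (∑ k : Fin m, Finsupp.single k (1 : ℕ)) j = 1 := by
  rw [Finsupp.finset_sum_apply]
  simp [Finsupp.single_apply]

lemma card_U_pos (h : ∀ j, 1 ≤ d j) :
    Nat.card (SetU m d) = Nat.card (SetA m (d - ∑ k : Fin m, Finsupp.single k 1)) := by
  apply Nat.card_congr
  apply Equiv.subtypeEquivRight
  intro l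
  refine and_congr_right (fun _ => and_congr_right (fun _ => forall_congr' (fun j => ?_)))
  rw [Finsupp.tsub_apply, sum_single_apply]
  have := h j
  omega

lemma card_U_zero (h : ∃ j, d j = 0) : Nat.card (SetU m d) = 0 := by
  obtain ⟨j, hj⟩ := h
  have : IsEmpty (SetU m d) := by
    refine ⟨fun x => ?_⟩
    have hc := x.2.2.2 j
    omega
  exact Nat.card_of_isEmpty

lemma card_A_zero (hm1 : 1 ≤ m) : Nat.card (SetA m (0 : Fin m →₀ ℕ)) = 1 := by
  have e : SetA m (0 : Fin m →₀ ℕ) ≃ Unit := by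
    refine ⟨fun _ => Unit.unit,
      fun _ => ⟨[], fun x hx => absurd hx List.not_mem_nil, adm_nil hm1, fun i => by simp⟩,
      fun a => ?_, fun _ => rfl⟩
    obtain ⟨l, hP, hA, hc⟩ := a
    apply Subtype.ext
    show [] = l
    by_contra hne
    obtain ⟨x, hx⟩ := List.exists_mem_of_ne_nil l (fun h => hne h.symm)
    obtain ⟨h1, h2⟩ := hP x hx
    have hc' := hc ⟨x - 1, by omega⟩
    simp only [Finsupp.coe_zero, Pi.zero_apply] at hc'
    rw [show x - 1 + 1 = x by omega] at hc'
    exact (List.count_eq_zero.mp hc') hx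
  rw [Nat.card_congr e]
  exact Nat.card_unique

lemma key_identity (hm : 2 ≤ m) (hd : d ≠ 0) :
    Nat.card (SetA m d) + Nat.card (SetU m d) = ∑ i : Fin m, Nat.card (SetS m d i) := by
  symm
  rw [← nat_card_sigma, card_sigma_S, card_T_split, card_T1 hm hd, card_T2 hm]

lemma prod_X_monomial (m : ℕ) (s : Finset (Fin m)) :
    ∏ i ∈ s, (MvPowerSeries.X i : MvPowerSeries (Fin m) ℤ) =
      MvPowerSeries.monomial (∑ i ∈ s, Finsupp.single i 1) 1 := by
  classical
  induction s using Finset.induction with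
  | empty => simp [MvPowerSeries.monomial_zero_one]
  | @insert a s h ih =>
    rw [Finset.prod_insert h, Finset.sum_insert h, ih, MvPowerSeries.X_def,
      MvPowerSeries.monomial_mul_monomial, one_mul]

lemma coeff_admGenFun' (m : ℕ) (d : Fin m →₀ ℕ) :
    MvPowerSeries.coeff d (admGenFun m m) = (Nat.card (SetA m d) : ℤ) := rfl

end Cards


end AdmAux

open AdmAux in
/-- For `k = m`:  `F_{m,m}(t_1,…,t_m) · (1 - (t_1 + ⋯ + t_m) + t_1 ⋯ t_m) = 1`. -/
theorem admissible_gen_fun_k_eq_m (m : ℕ) (hm : 2 ≤ m) :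
    admGenFun m m *
      (1 - (∑ i : Fin m, MvPowerSeries.X i) +
        ∏ i : Fin m, (MvPowerSeries.X i : MvPowerSeries (Fin m) ℤ)) = 1 := by
  classical
  apply MvPowerSeries.ext
  intro d
  rw [mul_add, mul_sub, mul_one, map_add, map_sub, Finset.mul_sum, map_sum,
    prod_X_monomial, MvPowerSeries.coeff_mul_monomial, MvPowerSeries.coeff_one]
  simp only [MvPowerSeries.X_def, MvPowerSeries.coeff_mul_monomial, mul_one, coeff_admGenFun']
  have hS : ∀ i : Fin m, (if Finsupp.single i 1 ≤ d then
      (Nat.card (SetA m (d - Finsupp.single i 1)) : ℤ) else 0) = (Nat.card (SetS m d i) : ℤ) := by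
    intro i
    by_cases h : 1 ≤ d i
    · rw [if_pos (Finsupp.single_le_iff.mpr h), card_S_pos h]
    · rw [if_neg (fun hle => h (Finsupp.single_le_iff.mp hle)), card_S_zero (by omega)]
      simp
  have hU : (if (∑ i : Fin m, Finsupp.single i (1 : ℕ)) ≤ d then
      (Nat.card (SetA m (d - ∑ i : Fin m, Finsupp.single i 1)) : ℤ) else 0)
      = (Nat.card (SetU m d) : ℤ) := by
    by_cases h : ∀ j, 1 ≤ d j
    · rw [if_pos (Finsupp.le_def.mpr (fun j => by rw [sum_single_apply]; exact h j)),
        card_U_pos h]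
    · push_neg at h
      obtain ⟨j, hj⟩ := h
      rw [if_neg (fun hle => by have := Finsupp.le_def.mp hle j; rw [sum_single_apply] at this; omega),
        card_U_zero ⟨j, by omega⟩]
      simp
  simp only [hS]
  rw [hU]
  by_cases hd : d = 0
  · subst hd
    rw [if_pos rfl]
    have h0 : ∀ i : Fin m, Nat.card (SetS m (0 : Fin m →₀ ℕ) i) = 0 :=
      fun i => card_S_zero rfl
    have hU0 : Nat.card (SetU m (0 : Fin m →₀ ℕ)) = 0 := card_U_zero ⟨⟨0, by omega⟩, rfl⟩
    have hA := card_A_zero (m := m) (by omega)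
    simp [h0, hU0, hA]
  · rw [if_neg hd]
    have hkey := key_identity hm hd
    have hZ : (Nat.card (SetA m d) : ℤ) + (Nat.card (SetU m d) : ℤ)
        = ∑ i : Fin m, (Nat.card (SetS m d i) : ℤ) := by exact_mod_cast hkey
    linarith
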